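/- Let F be the free group on the four free generators a, ā, b, b̄, and let U be a normal subgroup of finite index in F. Then the image in F of the two-sided Dyck language D₂* is contained in ⟨D'₂*⟩·U, where ⟨D'₂*⟩ denotes the subgroup of F generated by the images of the words of the one-sided Dyck language D'₂*. -/

import Mathlib

/-- The four-letter alphabet `{a, ā, b, b̄}`. -/
inductive Letter : Type
  | a | abar | b | bbar
  deriving DecidableEq

/-- The "formal inverse" letter: `a ↦ ā`, `ā ↦ a`, `b ↦ b̄`, `b̄ ↦ b`. -/
def Letter.bar : Letter → Letter
  | .a => .abar
  | .abar => .a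
  | .b => .bbar
  | .bbar => .b

/-- The free monoid `M` on the four letters. -/
abbrev M : Type := FreeMonoid Letter

/-- The free group `F` on the four free generators. -/
abbrev F : Type := FreeGroup Letter

/-- The canonical embedding `M → F`. -/
def emb : M →* F := FreeMonoid.lift (FreeGroup.of : Letter → F)

/-- The one-sided (restricted) Dyck language `D'₂*`: the smallest subset of `M`
containing the empty word, closed under concatenation and under
`w ↦ a·w·ā` and `w ↦ b·w·b̄`. -/
inductive OneDyck : M → Prop
  | empty : OneDyck 1
  | mul {u v : M} : OneDyck u → OneDyck v → OneDyck (u * v)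
  | brA {u : M} : OneDyck u →
      OneDyck (FreeMonoid.of Letter.a * u * FreeMonoid.of Letter.abar)
  | brB {u : M} : OneDyck u →
      OneDyck (FreeMonoid.of Letter.b * u * FreeMonoid.of Letter.bbar)

/-- One reduction step: deletion of an adjacent two-letter factor
`aā`, `āa`, `bb̄` or `b̄b`. -/
inductive PairDeletion : M → M → Prop
  | step (u v : M) (l : Letter) :
      PairDeletion (u * FreeMonoid.of l * FreeMonoid.of l.bar * v) (u * v)

/-- The two-sided (unrestricted) Dyck language `D₂*`: words reducing to the
empty word by successive deletions of adjacent factors `aā`, `āa`, `bb̄`, `b̄b`. -/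
def TwoDyck (w : M) : Prop := Relation.ReflTransGen PairDeletion w 1

/-- The two generators `x, y` of `F₂`. -/
inductive Gen : Type
  | x | y
  deriving DecidableEq

/-- The free group `F₂` on the two free generators `x, y`. -/
abbrev F₂ : Type := FreeGroup Gen

/-- The homomorphism `φ : F → F₂` with `φ(a) = x`, `φ(ā) = x⁻¹`,
`φ(b) = y`, `φ(b̄) = y⁻¹`. -/
def phi : F →* F₂ := FreeGroup.lift fun l => match l with
  | .a => FreeGroup.of Gen.x
  | .abar => (FreeGroup.of Gen.x)⁻¹
  | .b => FreeGroup.of Gen.y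
  | .bbar => (FreeGroup.of Gen.y)⁻¹
namespace DyckAux

/-- The subgroup `⟨D'₂*⟩ ⊔ U`. -/
abbrev Kgrp (U : Subgroup F) : Subgroup F :=
  Subgroup.closure (emb '' {w' : M | OneDyck w'}) ⊔ U

lemma emb_of (l : Letter) : emb (FreeMonoid.of l) = FreeGroup.of l := rfl

lemma oneDyck_mem {U : Subgroup F} {v : M} (hv : OneDyck v) : emb v ∈ Kgrp U :=
  Subgroup.mem_sup_left (Subgroup.subset_closure (Set.mem_image_of_mem emb hv))

lemma conj_pos {U : Subgroup F} [hN : U.Normal] (l : Letter)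
    (hbr : ∀ u : M, OneDyck u → OneDyck (FreeMonoid.of l * u * FreeMonoid.of l.bar))
    {g : F} (hg : g ∈ Kgrp U) :
    FreeGroup.of l * g * (FreeGroup.of l)⁻¹ ∈ Kgrp U := by
  have key : (Kgrp U).map (MulAut.conj (FreeGroup.of l)).toMonoidHom ≤ Kgrp U := by
    rw [Subgroup.map_sup]
    apply sup_le
    · rw [MonoidHom.map_closure, Subgroup.closure_le]
      rintro x hx
      simp only [Set.mem_image, Set.mem_setOf_eq] at hx
      obtain ⟨y, ⟨v, hv, rfl⟩, rfl⟩ := hx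
      have h1 : emb (FreeMonoid.of l * v * FreeMonoid.of l.bar) ∈ Kgrp U :=
        oneDyck_mem (hbr v hv)
      have h2 : emb (FreeMonoid.of l * 1 * FreeMonoid.of l.bar) ∈ Kgrp U :=
        oneDyck_mem (hbr 1 .empty)
      have h3 := mul_mem h1 (inv_mem h2)
      have heq : emb (FreeMonoid.of l * v * FreeMonoid.of l.bar) *
          (emb (FreeMonoid.of l * 1 * FreeMonoid.of l.bar))⁻¹ =
          (MulAut.conj (FreeGroup.of l)).toMonoidHom (emb v) := by
        simp only [map_mul, map_one, emb_of, MulEquiv.coe_toMonoidHom, MulAut.conj_apply]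
        group
      rwa [heq] at h3
    · rintro x ⟨y, hy, rfl⟩
      exact Subgroup.mem_sup_right (by simpa using hN.conj_mem y hy (FreeGroup.of l))
  have := key (Subgroup.mem_map_of_mem _ hg)
  simpa using this

lemma conj_pos_pow {U : Subgroup F} [U.Normal] (l : Letter)
    (hbr : ∀ u : M, OneDyck u → OneDyck (FreeMonoid.of l * u * FreeMonoid.of l.bar))
    (k : ℕ) {g : F} (hg : g ∈ Kgrp U) :
    (FreeGroup.of l) ^ k * g * ((FreeGroup.of l) ^ k)⁻¹ ∈ Kgrp U := by
  induction k with
  | zero => simpa using hg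
  | succ n ih =>
      have h := conj_pos l hbr ih
      have heq : (FreeGroup.of l) ^ (n + 1) * g * ((FreeGroup.of l) ^ (n + 1))⁻¹ =
          FreeGroup.of l * ((FreeGroup.of l) ^ n * g * ((FreeGroup.of l) ^ n)⁻¹) *
            (FreeGroup.of l)⁻¹ := by group
      rwa [heq]

lemma conj_neg {U : Subgroup F} [U.Normal] [U.FiniteIndex] (l : Letter)
    (hbr : ∀ u : M, OneDyck u → OneDyck (FreeMonoid.of l * u * FreeMonoid.of l.bar))
    {g : F} (hg : g ∈ Kgrp U) :
    FreeGroup.of l.bar * g * (FreeGroup.of l.bar)⁻¹ ∈ Kgrp U := by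
  have hp : FreeGroup.of l * FreeGroup.of l.bar ∈ Kgrp U := by
    have h := oneDyck_mem (U := U) (hbr 1 .empty)
    rw [mul_one] at h
    rwa [map_mul, emb_of, emb_of] at h
  obtain ⟨m, hm⟩ := Nat.exists_eq_succ_of_ne_zero
    (Subgroup.FiniteIndex.index_ne_zero (H := U))
  have hpow : (FreeGroup.of l) ^ (m + 1) ∈ U := by
    have := U.pow_index_mem (FreeGroup.of l)
    rwa [hm] at this
  have hg' : (FreeGroup.of l * FreeGroup.of l.bar) * g *
      (FreeGroup.of l * FreeGroup.of l.bar)⁻¹ ∈ Kgrp U :=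
    mul_mem (mul_mem hp hg) (inv_mem hp)
  have hmid : ((FreeGroup.of l) ^ (m + 1))⁻¹ *
      ((FreeGroup.of l * FreeGroup.of l.bar) * g * (FreeGroup.of l * FreeGroup.of l.bar)⁻¹) *
      (FreeGroup.of l) ^ (m + 1) ∈ Kgrp U :=
    mul_mem (mul_mem (inv_mem (Subgroup.mem_sup_right hpow)) hg') (Subgroup.mem_sup_right hpow)
  have h := conj_pos_pow l hbr m hmid
  have heq : (FreeGroup.of l) ^ m *
      (((FreeGroup.of l) ^ (m + 1))⁻¹ *
        ((FreeGroup.of l * FreeGroup.of l.bar) * g * (FreeGroup.of l * FreeGroup.of l.bar)⁻¹) *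
        (FreeGroup.of l) ^ (m + 1)) * ((FreeGroup.of l) ^ m)⁻¹ =
      FreeGroup.of l.bar * g * (FreeGroup.of l.bar)⁻¹ := by group
  rwa [heq] at h

lemma conj_letter {U : Subgroup F} [U.Normal] [U.FiniteIndex] (l : Letter)
    {g : F} (hg : g ∈ Kgrp U) :
    FreeGroup.of l * g * (FreeGroup.of l)⁻¹ ∈ Kgrp U := by
  cases l with
  | a => exact conj_pos _ (fun u hu => .brA hu) hg
  | b => exact conj_pos _ (fun u hu => .brB hu) hg
  | abar => exact conj_neg Letter.a (fun u hu => .brA hu) hg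
  | bbar => exact conj_neg Letter.b (fun u hu => .brB hu) hg

lemma conj_word {U : Subgroup F} [U.Normal] [U.FiniteIndex] (u : M)
    {g : F} (hg : g ∈ Kgrp U) :
    emb u * g * (emb u)⁻¹ ∈ Kgrp U := by
  induction u using FreeMonoid.inductionOn' with
  | one => simpa using hg
  | of_mul l v ih =>
      have h := conj_letter l ih
      have heq : emb (FreeMonoid.of l * v) * g * (emb (FreeMonoid.of l * v))⁻¹ =
          FreeGroup.of l * (emb v * g * (emb v)⁻¹) * (FreeGroup.of l)⁻¹ := by
        rw [map_mul, emb_of]; group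
      rwa [heq]

lemma pair_mem {U : Subgroup F} [U.Normal] [U.FiniteIndex] (l : Letter) :
    emb (FreeMonoid.of l * FreeMonoid.of l.bar) ∈ Kgrp U := by
  have base : ∀ l' : Letter,
      (∀ u : M, OneDyck u → OneDyck (FreeMonoid.of l' * u * FreeMonoid.of l'.bar)) →
      FreeGroup.of l' * FreeGroup.of l'.bar ∈ Kgrp U := by
    intro l' hbr
    have h := oneDyck_mem (U := U) (hbr 1 .empty)
    rw [mul_one] at h
    rwa [map_mul, emb_of, emb_of] at h
  rw [map_mul, emb_of, emb_of]
  cases l with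
  | a => exact base Letter.a (fun u hu => .brA hu)
  | b => exact base Letter.b (fun u hu => .brB hu)
  | abar =>
      have hp := base Letter.a (fun u hu => .brA hu)
      simp only [Letter.bar] at hp
      have h := conj_letter (U := U) Letter.abar hp
      have heq : FreeGroup.of Letter.abar *
          (FreeGroup.of Letter.a * FreeGroup.of Letter.abar) *
          (FreeGroup.of Letter.abar)⁻¹ =
          FreeGroup.of Letter.abar * FreeGroup.of Letter.a := by group
      show FreeGroup.of Letter.abar * FreeGroup.of Letter.a ∈ Kgrp U
      rwa [heq] at h
  | bbar =>
      have hp := base Letter.b (fun u hu => .brB hu)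
      simp only [Letter.bar] at hp
      have h := conj_letter (U := U) Letter.bbar hp
      have heq : FreeGroup.of Letter.bbar *
          (FreeGroup.of Letter.b * FreeGroup.of Letter.bbar) *
          (FreeGroup.of Letter.bbar)⁻¹ =
          FreeGroup.of Letter.bbar * FreeGroup.of Letter.b := by group
      show FreeGroup.of Letter.bbar * FreeGroup.of Letter.b ∈ Kgrp U
      rwa [heq] at h

lemma step_mem {U : Subgroup F} [U.Normal] [U.FiniteIndex] {w w' : M}
    (h : PairDeletion w w') (hw' : emb w' ∈ Kgrp U) : emb w ∈ Kgrp U := by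
  obtain ⟨u, v, l⟩ := h
  rw [map_mul] at hw'
  have hc := conj_word (U := U) u (pair_mem (U := U) l)
  have h2 := mul_mem hc hw'
  have heq : emb u * emb (FreeMonoid.of l * FreeMonoid.of l.bar) * (emb u)⁻¹ *
      (emb u * emb v) =
      emb (u * FreeMonoid.of l * FreeMonoid.of l.bar * v) := by
    simp only [map_mul]
    group
  rwa [heq] at h2

end DyckAux

open scoped Pointwise

/-- For every finite-index normal subgroup `U` of `F`, the image in `F` of the
two-sided Dyck language is contained in `⟨D'₂*⟩·U`, where `⟨D'₂*⟩` is the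
subgroup of `F` generated by the images of the one-sided Dyck words. -/
theorem twoDyck_subset_oneDyck_span_mul (U : Subgroup F) (hN : U.Normal)
    (hFI : U.FiniteIndex) (w : M) (hw : TwoDyck w) :
    ∃ s u : F, s ∈ Subgroup.closure (emb '' {w' : M | OneDyck w'}) ∧
      u ∈ U ∧ emb w = s * u := by
  haveI := hN
  haveI := hFI
  have hK : emb w ∈ DyckAux.Kgrp U := by
    induction hw using Relation.ReflTransGen.head_induction_on with
    | refl => simpa using one_mem (DyckAux.Kgrp U)
    | head h _ ih => exact DyckAux.step_mem h ih
  have hset : emb w ∈ ((Subgroup.closure (emb '' {w' : M | OneDyck w'}) : Set F) * (U : Set F)) := by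
    rw [← Subgroup.mul_normal]
    exact hK
  obtain ⟨s, hs, u, hu, hsu⟩ := hset
  exact ⟨s, u, hs, hu, hsu.symm⟩
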